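/- arXiv:2212.12268 — 3 statements merged into one kernel-verified Lean document; each statement's English description precedes it below -/
import Mathlib

section
/- Let U be a finite set with |U| ≥ 2 and let x : U → ℝ^d be a configuration of points. Define D(x) as the maximum over nontrivial partitions {S,T} of U of the minimum l∞-distance between points of S and points of T, and diam(x) as the maximum l∞-distance between any two points of the configuration. Then D(x) ≤ diam(x) ≤ (|U| - 1) · D(x). -/
open scoped BigOperators

/-- The maximal cluster-separation distance `D(x)`: the supremum over nontrivial
partitions `{S, Sᶜ}` of `U` of the minimal `l∞`-distance between the two clusters. -/
noncomputable def sepDist {d : ℕ} {U : Type*} [Fintype U] [DecidableEq U]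
    (x : U → (Fin d → ℝ)) : ℝ :=
  ⨆ S : {S : Finset U // S.Nonempty ∧ Sᶜ.Nonempty},
    ⨅ i : (S.1 : Finset U), ⨅ j : ((S.1ᶜ : Finset U)), ‖x i.1 - x j.1‖

/-- The `l∞`-diameter of a configuration. -/
noncomputable def configDiam {d : ℕ} {U : Type*} [Fintype U]
    (x : U → (Fin d → ℝ)) : ℝ :=
  ⨆ i : U, ⨆ j : U, ‖x i - x j‖

private lemma walk_norm_le {d : ℕ} {U : Type*} (x : U → (Fin d → ℝ)) {D : ℝ}
    {G : SimpleGraph U} (hG : ∀ u v, G.Adj u v → ‖x u - x v‖ ≤ D)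
    {a b : U} (p : G.Walk a b) : ‖x a - x b‖ ≤ p.length * D := by
  induction p with
  | nil => simp
  | @cons u v w h q ih =>
    have h1 : ‖x u - x w‖ ≤ ‖x u - x v‖ + ‖x v - x w‖ :=
      norm_sub_le_norm_sub_add_norm_sub _ _ _
    have h2 := hG _ _ h
    simp only [SimpleGraph.Walk.length_cons]
    push_cast
    linarith

theorem sepDist_le_diam_le_card_mul_sepDist {d : ℕ} {U : Type*} [Fintype U] [DecidableEq U]
    (hU : 2 ≤ Fintype.card U) (x : U → (Fin d → ℝ)) :
    sepDist x ≤ configDiam x ∧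
      configDiam x ≤ (Fintype.card U - 1 : ℝ) * sepDist x := by
  classical
  have hneU : Nonempty U := Fintype.card_pos_iff.mp (by omega)
  obtain ⟨a0, b0, hab0⟩ := Fintype.exists_pair_of_one_lt_card (α := U) (by omega)
  have hne : Nonempty {S : Finset U // S.Nonempty ∧ Sᶜ.Nonempty} :=
    ⟨⟨{a0}, ⟨a0, Finset.mem_singleton_self a0⟩,
      ⟨b0, by simp [Ne.symm hab0]⟩⟩⟩
  -- first inequality
  have h1 : sepDist x ≤ configDiam x := by
    apply ciSup_le
    rintro ⟨S, hS1, hS2⟩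
    obtain ⟨i, hi⟩ := hS1
    obtain ⟨j, hj⟩ := hS2
    have hjc : j ∈ Sᶜ := hj
    haveI : Nonempty (S : Finset U) := ⟨⟨i, hi⟩⟩
    haveI : Nonempty ((Sᶜ : Finset U) : Type _) := ⟨⟨j, hjc⟩⟩
    show (⨅ i : (S : Finset U), ⨅ j : ((Sᶜ : Finset U)), ‖x i.1 - x j.1‖)
        ≤ ⨆ i : U, ⨆ j : U, ‖x i - x j‖
    calc (⨅ i : (S : Finset U), ⨅ j : ((Sᶜ : Finset U)), ‖x i.1 - x j.1‖)
        ≤ ⨅ j : ((Sᶜ : Finset U)), ‖x i - x j.1‖ :=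
          ciInf_le ((Set.finite_range _).bddBelow) (⟨i, hi⟩ : (S : Finset U))
      _ ≤ ‖x i - x j‖ := ciInf_le ((Set.finite_range _).bddBelow) (⟨j, hjc⟩ : ((Sᶜ : Finset U)))
      _ ≤ ⨆ j' : U, ‖x i - x j'‖ := le_ciSup (f := fun j' : U => ‖x i - x j'‖) ((Set.finite_range _).bddAbove) j
      _ ≤ ⨆ i' : U, ⨆ j' : U, ‖x i' - x j'‖ :=
          le_ciSup ((Set.finite_range fun i' : U => ⨆ j' : U, ‖x i' - x j'‖).bddAbove) i
  -- sepDist nonneg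
  have hD0 : 0 ≤ sepDist x := by
    obtain ⟨S⟩ := hne
    show (0 : ℝ) ≤ ⨆ S : {S : Finset U // S.Nonempty ∧ Sᶜ.Nonempty},
      ⨅ i : (S.1 : Finset U), ⨅ j : ((S.1ᶜ : Finset U)), ‖x i.1 - x j.1‖
    refine le_trans ?_ (le_ciSup ((Set.finite_range _).bddAbove) S)
    haveI : Nonempty (S.1 : Finset U) := ⟨⟨_, S.2.1.choose_spec⟩⟩
    haveI : Nonempty ((S.1ᶜ : Finset U) : Type _) := ⟨⟨_, S.2.2.choose_spec⟩⟩
    exact le_ciInf fun i => le_ciInf fun j => norm_nonneg _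
  refine ⟨h1, ?_⟩
  set D := sepDist x with hD
  -- the graph
  let G : SimpleGraph U :=
    { Adj := fun u v => u ≠ v ∧ ‖x u - x v‖ ≤ D
      symm := by
        refine ⟨?_⟩
        intro u v ⟨h1, h2⟩
        exact ⟨h1.symm, by rwa [norm_sub_rev]⟩
      loopless := ⟨fun u h => h.1 rfl⟩ }
  have hG : ∀ u v, G.Adj u v → ‖x u - x v‖ ≤ D := fun u v h => h.2
  -- connectivity
  have hreach : ∀ i j : U, G.Reachable i j := by
    intro i j
    by_contra hnr
    set S : Finset U := Finset.univ.filter (fun v => G.Reachable i v) with hSdef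
    have hiS : i ∈ S := by simp [hSdef, SimpleGraph.Reachable.refl]
    have hjS : j ∈ Sᶜ := by simp [hSdef, hnr]
    haveI : Nonempty (S : Finset U) := ⟨⟨i, hiS⟩⟩
    haveI : Nonempty ((Sᶜ : Finset U) : Type _) := ⟨⟨j, hjS⟩⟩
    -- the inf over the partition is ≤ D
    have hle : (⨅ a : (S : Finset U), ⨅ b : ((Sᶜ : Finset U)), ‖x a.1 - x b.1‖) ≤ D := by
      show _ ≤ sepDist x
      show _ ≤ ⨆ S : {S : Finset U // S.Nonempty ∧ Sᶜ.Nonempty},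
        ⨅ i : (S.1 : Finset U), ⨅ j : ((S.1ᶜ : Finset U)), ‖x i.1 - x j.1‖
      exact le_ciSup (f := fun T : {S : Finset U // S.Nonempty ∧ Sᶜ.Nonempty} =>
          ⨅ i : (T.1 : Finset U), ⨅ j : ((T.1ᶜ : Finset U)), ‖x i.1 - x j.1‖)
        ((Set.finite_range _).bddAbove)
        (⟨S, ⟨i, hiS⟩, ⟨j, hjS⟩⟩ : {S : Finset U // S.Nonempty ∧ Sᶜ.Nonempty})
    -- the inf is attained
    obtain ⟨a, ha⟩ := exists_eq_ciInf_of_finite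
      (f := fun a : (S : Finset U) => ⨅ b : ((Sᶜ : Finset U)), ‖x a.1 - x b.1‖)
    obtain ⟨b, hb⟩ := exists_eq_ciInf_of_finite
      (f := fun b : ((Sᶜ : Finset U)) => ‖x a.1 - x b.1‖)
    have hab : ‖x a.1 - x b.1‖ ≤ D := by
      rw [hb, ha]; exact hle
    have haneb : a.1 ≠ b.1 := by
      intro h
      have := a.2
      rw [h] at this
      exact (Finset.mem_compl.mp b.2) this
    have hadj : G.Adj a.1 b.1 := ⟨haneb, hab⟩
    have hra : G.Reachable i a.1 := by
      exact (Finset.mem_filter.mp a.2).2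
    have hrb : G.Reachable i b.1 := hra.trans hadj.reachable
    have : b.1 ∈ S := by simp [hSdef, hrb]
    exact (Finset.mem_compl.mp b.2) this
  -- per-pair bound
  have key : ∀ i j : U, ‖x i - x j‖ ≤ (Fintype.card U - 1 : ℝ) * D := by
    intro i j
    obtain ⟨w⟩ := hreach i j
    set p := w.toPath with hp
    have hlen : p.1.length < Fintype.card U := p.2.length_lt
    have hlen' : (p.1.length : ℝ) ≤ (Fintype.card U - 1 : ℝ) := by
      have : p.1.length + 1 ≤ Fintype.card U := hlen
      push_cast [← Nat.cast_le (α := ℝ)] at this ⊢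
      linarith
    calc ‖x i - x j‖ ≤ p.1.length * D := walk_norm_le x hG p.1
      _ ≤ (Fintype.card U - 1 : ℝ) * D :=
        mul_le_mul_of_nonneg_right hlen' hD0
  show (⨆ i : U, ⨆ j : U, ‖x i - x j‖) ≤ _
  exact ciSup_le fun i => ciSup_le fun j => key i j
end

section
/- For every connected graph G on vertex set {0,…,k} with k ≥ 1 and every non-edge e of G, one has v(G ∪ e) < v(G), where v(H) := ∫_{ℝ^k} 1{H ⊆ 𝒢_{1,k}(0,u_1,…,u_k;1)} d(u_1,…,u_k) is the (one-dimensional) connectivity volume. -/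
open MeasureTheory
open scoped Classical

/-- The geometric graph on the reals `0, u_1, …, u_k`: `i` and `j` are adjacent
iff `i ≠ j` and `|u_i − u_j| ≤ 1` (with `u_0 = 0`). -/
def geomGraph1 {k : ℕ} (u : Fin k → ℝ) : SimpleGraph (Fin (k + 1)) where
  Adj i j := i ≠ j ∧ |(Fin.cons (0:ℝ) u : Fin (k+1) → ℝ) i - (Fin.cons (0:ℝ) u : Fin (k+1) → ℝ) j| ≤ 1
  symm := by
    constructor
    intro i j h
    exact ⟨h.1.symm, by rw [abs_sub_comm]; exact h.2⟩
  loopless := ⟨fun i h => h.1 rfl⟩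

/-- The one-dimensional connectivity volume
`v(H) := ∫_{ℝ^k} 1{H ⊆ 𝒢_{1,k}(0,u_1,…,u_k;1)} d(u_1,…,u_k)`. -/
noncomputable def connVol {k : ℕ} (H : SimpleGraph (Fin (k + 1))) : ℝ :=
  ∫ u : Fin k → ℝ, Set.indicator {u : Fin k → ℝ | H ≤ geomGraph1 u} (fun _ => (1 : ℝ)) u

section Aux

variable {k : ℕ}

lemma le_geomGraph1_iff (H : SimpleGraph (Fin (k+1))) (u : Fin k → ℝ) :
    H ≤ geomGraph1 u ↔ ∀ i j, H.Adj i j →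
      |(Fin.cons (0:ℝ) u : Fin (k+1) → ℝ) i - (Fin.cons (0:ℝ) u : Fin (k+1) → ℝ) j| ≤ 1 := by
  constructor
  · intro h i j hij
    exact (h hij).2
  · intro h i j hij
    exact ⟨hij.ne, h i j hij⟩

lemma continuous_consApply (i : Fin (k+1)) :
    Continuous fun u : Fin k → ℝ => (Fin.cons (0:ℝ) u : Fin (k+1) → ℝ) i := by
  induction i using Fin.cases with
  | zero => simpa using continuous_const
  | succ m => simpa using continuous_apply m

lemma isClosed_graphSet (H : SimpleGraph (Fin (k+1))) :
    IsClosed {u : Fin k → ℝ | H ≤ geomGraph1 u} := by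
  have hrw : {u : Fin k → ℝ | H ≤ geomGraph1 u} =
      ⋂ (i) (j) (_ : H.Adj i j),
        {u : Fin k → ℝ |
          |(Fin.cons (0:ℝ) u : Fin (k+1) → ℝ) i - (Fin.cons (0:ℝ) u : Fin (k+1) → ℝ) j| ≤ 1} := by
    ext u
    simp [le_geomGraph1_iff, Set.mem_iInter]
  rw [hrw]
  refine isClosed_iInter fun i => isClosed_iInter fun j => isClosed_iInter fun _ => ?_
  exact isClosed_le (((continuous_consApply i).sub (continuous_consApply j)).abs) continuous_const

lemma abs_sub_le_walk_length {G : SimpleGraph (Fin (k+1))} {u : Fin k → ℝ}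
    (hu : G ≤ geomGraph1 u) {a b : Fin (k+1)} (p : G.Walk a b) :
    |(Fin.cons (0:ℝ) u : Fin (k+1) → ℝ) a - (Fin.cons (0:ℝ) u : Fin (k+1) → ℝ) b|
      ≤ (p.length : ℝ) := by
  induction p with
  | nil => simp
  | @cons a c b h p ih =>
    have h1 : |(Fin.cons (0:ℝ) u : Fin (k+1) → ℝ) a - (Fin.cons (0:ℝ) u : Fin (k+1) → ℝ) c| ≤ 1 :=
      (hu h).2
    have h3 := abs_sub_le ((Fin.cons (0:ℝ) u : Fin (k+1) → ℝ) a)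
      ((Fin.cons (0:ℝ) u : Fin (k+1) → ℝ) c) ((Fin.cons (0:ℝ) u : Fin (k+1) → ℝ) b)
    rw [SimpleGraph.Walk.length_cons]
    push_cast
    linarith

lemma graphSet_subset_box {G : SimpleGraph (Fin (k+1))} (hG : G.Connected) :
    {u : Fin k → ℝ | G ≤ geomGraph1 u} ⊆
      Set.pi Set.univ fun _ : Fin k => Set.Icc (-(k:ℝ)) (k:ℝ) := by
  intro u hu m _
  obtain ⟨p⟩ := hG.preconnected m.succ 0
  have hlen : ((p.toPath : G.Walk m.succ 0).length : ℝ) ≤ (k : ℝ) := by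
    have h1 := p.toPath.2.length_lt
    rw [Fintype.card_fin] at h1
    exact_mod_cast Nat.lt_succ_iff.mp h1
  have h2 := abs_sub_le_walk_length hu (p.toPath : G.Walk m.succ 0)
  simp only [Fin.cons_succ, Fin.cons_zero, sub_zero] at h2
  have h3 := abs_le.mp (h2.trans hlen)
  exact ⟨h3.1, h3.2⟩

lemma connVol_eq (H : SimpleGraph (Fin (k+1))) :
    connVol H = (volume {u : Fin k → ℝ | H ≤ geomGraph1 u}).toReal := by
  rw [connVol]
  exact MeasureTheory.integral_indicator_one (isClosed_graphSet H).measurableSet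

end Aux

/-- For every connected graph `G` on `{0,…,k}` with `k ≥ 1` and every non-edge `e` of `G`,
adding `e` strictly decreases the connectivity volume: `v(G ∪ e) < v(G)`. -/
theorem connVol_union_nonedge_lt {k : ℕ} (hk : 1 ≤ k) (G : SimpleGraph (Fin (k + 1)))
    (hG : G.Connected) :
    ∀ e ∈ Gᶜ.edgeFinset,
      connVol (G ⊔ SimpleGraph.fromEdgeSet {e}) < connVol G := by
  intro e he
  induction e using Sym2.ind with
  | _ i j =>
  rw [SimpleGraph.mem_edgeFinset, SimpleGraph.mem_edgeSet, SimpleGraph.compl_adj] at he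
  obtain ⟨hne, hnadj⟩ := he
  set A : Set (Fin k → ℝ) := {u | G ≤ geomGraph1 u} with hA
  set B : Set (Fin k → ℝ) := {u | G ⊔ SimpleGraph.fromEdgeSet {s(i, j)} ≤ geomGraph1 u} with hB
  have hBA : B ⊆ A := by
    intro u hu
    simp only [hA, hB, Set.mem_setOf_eq] at hu ⊢
    exact le_trans le_sup_left hu
  have hAmeas : MeasurableSet A := (isClosed_graphSet G).measurableSet
  have hBmeas : MeasurableSet B := (isClosed_graphSet _).measurableSet
  have hAfin : volume A < ⊤ :=
    lt_of_le_of_lt (measure_mono (graphSet_subset_box hG))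
      ((isCompact_univ_pi fun _ => isCompact_Icc).measure_lt_top)
  -- the witness configuration
  set x : Fin (k+1) → ℝ := fun v => (3/4) * ((min (G.dist i v) 2 : ℕ) : ℝ) with hx
  have hedge : ∀ a b : Fin (k+1), G.Adj a b → |x a - x b| ≤ 3/4 := by
    intro a b hab
    have hd1 : G.dist a b = 1 := SimpleGraph.dist_eq_one_iff_adj.mpr hab
    have hd2 : G.dist b a = 1 := SimpleGraph.dist_eq_one_iff_adj.mpr hab.symm
    have t1 : G.dist i b ≤ G.dist i a + 1 := by
      have := hG.dist_triangle (u := i) (v := a) (w := b); omega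
    have t2 : G.dist i a ≤ G.dist i b + 1 := by
      have := hG.dist_triangle (u := i) (v := b) (w := a); omega
    have m1 : min (G.dist i a) 2 ≤ min (G.dist i b) 2 + 1 := by omega
    have m2 : min (G.dist i b) 2 ≤ min (G.dist i a) 2 + 1 := by omega
    have c1 : ((min (G.dist i a) 2 : ℕ) : ℝ) ≤ ((min (G.dist i b) 2 : ℕ) : ℝ) + 1 := by
      exact_mod_cast m1
    have c2 : ((min (G.dist i b) 2 : ℕ) : ℝ) ≤ ((min (G.dist i a) 2 : ℕ) : ℝ) + 1 := by
      exact_mod_cast m2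
    rw [hx, abs_sub_le_iff]
    constructor <;> [skip; skip] <;> nlinarith [c1, c2]
  have hxi : x i = 0 := by
    simp [hx, SimpleGraph.dist_self]
  have hxj : x j = 3/2 := by
    have hd0 : G.dist i j ≠ 0 := fun h => hne (hG.dist_eq_zero_iff.mp h)
    have hd1 : G.dist i j ≠ 1 := fun h => hnadj (SimpleGraph.dist_eq_one_iff_adj.mp h)
    have : min (G.dist i j) 2 = 2 := by omega
    simp only [hx]; rw [this]; norm_num
  set w : Fin k → ℝ := fun m => x m.succ - x 0 with hw
  set U : Set (Fin k → ℝ) := Set.pi Set.univ fun m => Metric.ball (w m) (1/8) with hU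
  have hUopen : IsOpen U := isOpen_set_pi Set.finite_univ fun m _ => Metric.isOpen_ball
  have hwU : w ∈ U := by
    intro m _
    simp [Metric.mem_ball]
  have hUpos : 0 < volume U := hUopen.measure_pos volume ⟨w, hwU⟩
  have hUsub : U ⊆ A \ B := by
    intro u hu
    have hclose : ∀ a : Fin (k+1),
        |(Fin.cons (0:ℝ) u : Fin (k+1) → ℝ) a - (x a - x 0)| ≤ 1/8 := by
      intro a
      induction a using Fin.cases with
      | zero => simp
      | succ m =>
        have := hu m (Set.mem_univ m)
        rw [Metric.mem_ball, Real.dist_eq] at this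
        simpa [hw] using this.le
    constructor
    · rw [hA, Set.mem_setOf_eq, le_geomGraph1_iff]
      intro a b hab
      have h1 := abs_le.mp (hclose a)
      have h2 := abs_le.mp (hclose b)
      have h3 := abs_le.mp (hedge a b hab)
      rw [abs_le]
      constructor <;> [skip; skip] <;> · obtain ⟨p1, q1⟩ := h1; obtain ⟨p2, q2⟩ := h2
                                         obtain ⟨p3, q3⟩ := h3; linarith
    · intro huB
      rw [hB, Set.mem_setOf_eq] at huB
      have hadj : (G ⊔ SimpleGraph.fromEdgeSet {s(i, j)}).Adj i j := by
        refine Or.inr ?_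
        rw [SimpleGraph.fromEdgeSet_adj]
        exact ⟨rfl, hne⟩
      have hle := (huB hadj).2
      have h1 := abs_le.mp (hclose i)
      have h2 := abs_le.mp (hclose j)
      have h3 := abs_le.mp hle
      rw [hxi] at h1; rw [hxj] at h2
      obtain ⟨p1, q1⟩ := h1; obtain ⟨p2, q2⟩ := h2; obtain ⟨p3, q3⟩ := h3
      linarith
  have hBfin : volume B ≠ ⊤ := ((measure_mono hBA).trans_lt hAfin).ne
  have hkey : volume B < volume A := by
    calc volume B < volume B + volume (A \ B) :=
          ENNReal.lt_add_right hBfin (lt_of_lt_of_le hUpos (measure_mono hUsub)).ne'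
      _ = volume (B ∪ (A \ B)) := (measure_union disjoint_sdiff_self_right (hAmeas.diff hBmeas)).symm
      _ = volume A := by rw [Set.union_diff_cancel hBA]
  rw [connVol_eq, connVol_eq]
  exact (ENNReal.toReal_lt_toReal hBfin hAfin.ne).mpr hkey
end

section
/- Cayley's formula: the number of labeled trees on a vertex set with n ≥ 1 elements is n^{n−2} (equivalently, the number of trees on {0,1,…,k} is (k+1)^{k−1}). -/
set_option linter.unusedSectionVars false
set_option maxHeartbeats 1000000

namespace CayleyProof
open Function

section Basics
variable {α : Type*}

lemma chain_inj {p : α → α} {v r : α} {L : ℕ} (hL : p^[L] v = r)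
    (hmin : ∀ j < L, p^[j] v ≠ r) :
    ∀ i ≤ L, ∀ j ≤ L, p^[i] v = p^[j] v → i = j := by
  have key : ∀ i j, i ≤ j → j ≤ L → p^[i] v = p^[j] v → i = j := by
    intro i j hij hjL he
    by_contra hne
    have hlt : i < j := lt_of_le_of_ne hij hne
    have : p^[(L - j) + i] v = r := by
      rw [Function.iterate_add_apply, he, ← Function.iterate_add_apply,
        Nat.sub_add_cancel hjL, hL]
    exact hmin _ (by omega) this
  intro i hi j hj he
  rcases le_total i j with h | h
  · exact key i j h hj he
  · exact (key j i h hi he.symm).symm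

/-- two functions agreeing off C iterate identically as long as we stay off C -/
lemma iterate_eq_of_agree {C : Set α} {f g : α → α} (hfg : ∀ v ∉ C, f v = g v)
    {v : α} {m : ℕ} (hm : ∀ j < m, f^[j] v ∉ C) : ∀ j ≤ m, g^[j] v = f^[j] v := by
  intro j hj
  induction j with
  | zero => rfl
  | succ k ih =>
    rw [Function.iterate_succ_apply', Function.iterate_succ_apply',
      ih (by omega), hfg _ (hm k (by omega))]

lemma iterate_mem_of_closed {C : Set α} {f : α → α} (hC : ∀ x ∈ C, f x ∈ C)
    {v : α} (hv : v ∈ C) (k : ℕ) : f^[k] v ∈ C := by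
  induction k with
  | zero => exact hv
  | succ k ih => rw [Function.iterate_succ_apply']; exact hC _ ih

/-- eventual periodicity on finite types -/
lemma exists_eventually_periodic [Finite α] (f : α → α) (v : α) :
    ∃ m k, 0 < k ∧ f^[k] (f^[m] v) = f^[m] v := by
  obtain ⟨i, j, hne, he⟩ := Finite.exists_ne_map_eq_of_infinite (fun k : ℕ => f^[k] v)
  rcases lt_or_gt_of_ne hne with h | h
  · exact ⟨i, j - i, by omega, by
      rw [← Function.iterate_add_apply, Nat.sub_add_cancel h.le]; exact he.symm⟩
  · exact ⟨j, i - j, by omega, by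
      rw [← Function.iterate_add_apply, Nat.sub_add_cancel h.le]; exact he⟩

/-- the set of periodic points of f -/
def per (f : α → α) : Set α := {x | ∃ k, 0 < k ∧ f^[k] x = x}

lemma per_closed {f : α → α} {x : α} (hx : x ∈ per f) : f x ∈ per f := by
  obtain ⟨k, hk, he⟩ := hx
  exact ⟨k, hk, by rw [← Function.iterate_succ_apply, Function.iterate_succ_apply', he]⟩

lemma per_inj {f : α → α} {x y : α} (hx : x ∈ per f) (hy : y ∈ per f)
    (he : f x = f y) : x = y := by
  obtain ⟨k, hk, hek⟩ := hx
  obtain ⟨l, hl, hel⟩ := hy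
  have hxk : f^[k * l] x = x := by
    rw [mul_comm, Function.iterate_mul]; exact Function.IsPeriodicPt.iterate hek l
  have hyl : f^[k * l] y = y := by
    rw [Function.iterate_mul]; exact Function.IsPeriodicPt.iterate hel k
  have h1 : 0 < k * l := Nat.mul_pos hk hl
  calc x = f^[k*l] x := hxk.symm
    _ = f^[k*l - 1] (f x) := by rw [← Function.iterate_succ_apply]; congr 1; omega
    _ = f^[k*l - 1] (f y) := by rw [he]
    _ = f^[k*l] y := by rw [← Function.iterate_succ_apply]; congr 1; omega
    _ = y := hyl

lemma mem_per_iterate [Finite α] (f : α → α) (v : α) : ∃ m, f^[m] v ∈ per f := by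
  obtain ⟨m, k, hk, he⟩ := exists_eventually_periodic f v
  exact ⟨m, k, hk, he⟩

/-- if v is periodic and its orbit reaches a fixed point r, then v = r -/
lemma per_eq_of_reaches {f : α → α} {v r : α} (hv : v ∈ per f)
    {m : ℕ} (hm : f^[m] v = r) (hr : f r = r) : v = r := by
  obtain ⟨k, hk, he⟩ := hv
  -- v = f^[k*m'] v for suitable multiple ≥ m
  have hmult : ∀ t, f^[k * t] v = v := by
    intro t
    rw [mul_comm, Function.iterate_mul]
    exact Function.IsPeriodicPt.iterate he t
  have h1 : m ≤ k * (m + 1) := by nlinarith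
  have : f^[k * (m+1)] v = r := by
    have : f^[(k*(m+1) - m) + m] v = f^[k*(m+1) - m] (f^[m] v) := Function.iterate_add_apply ..
    rw [Nat.sub_add_cancel h1] at this
    rw [this, hm, Function.iterate_fixed hr]
  rw [hmult (m+1)] at this
  exact this


lemma per_eq_of_reaches' {f : α → α} {v r : α} (hv : ∃ k, 0 < k ∧ f^[k] v = v)
    {m : ℕ} (hm : f^[m] v = r) (hr : f r = r) : v = r := by
  obtain ⟨k, hk, he⟩ := hv
  have hmult : ∀ t, f^[k * t] v = v := by
    intro t
    rw [mul_comm, Function.iterate_mul]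
    exact Function.IsPeriodicPt.iterate he t
  have h1 : m ≤ k * (m + 1) := by nlinarith
  have h2 : f^[k * (m+1)] v = r := by
    have h3 : f^[(k*(m+1) - m) + m] v = f^[k*(m+1) - m] (f^[m] v) := Function.iterate_add_apply ..
    rw [Nat.sub_add_cancel h1] at h3
    rw [h3, hm, Function.iterate_fixed hr]
  rw [hmult (m+1)] at h2
  exact h2


end Basics

section Graph
open SimpleGraph
variable {α : Type*} [DecidableEq α] {G : SimpleGraph α}


/-- rooted-tree parent function -/
def IsRTF (r : α) (p : α → α) : Prop := p r = r ∧ ∀ v, ∃ k, p^[k] v = r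

/-- the graph of a parent function -/
def graphOf (p : α → α) : SimpleGraph α := SimpleGraph.fromRel (fun x y => p x = y)

lemma graphOf_adj (p : α → α) (x y : α) :
    (graphOf p).Adj x y ↔ x ≠ y ∧ (p x = y ∨ p y = x) := SimpleGraph.fromRel_adj ..

lemma reachable_root {p : α → α} {r : α} :
    ∀ (k : ℕ) (v : α), p^[k] v = r → (graphOf p).Reachable v r := by
  intro k
  induction k with
  | zero => intro v hv; exact hv ▸ Reachable.refl v
  | succ k ih =>
    intro v hv
    rw [Function.iterate_succ_apply] at hv
    have h2 := ih (p v) hv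
    by_cases he : v = p v
    · exact he ▸ h2
    · exact (Adj.reachable ((graphOf_adj p v (p v)).2 ⟨he, Or.inl rfl⟩)).trans h2

lemma graphOf_connected {p : α → α} {r : α} (h : ∀ v, ∃ k, p^[k] v = r) :
    (graphOf p).Connected := by
  rw [connected_iff]
  refine ⟨fun u v => ?_, ⟨r⟩⟩
  obtain ⟨k, hk⟩ := h u
  obtain ⟨l, hl⟩ := h v
  exact (reachable_root k u hk).trans (reachable_root l v hl).symm

lemma reachable_invariant {G' : SimpleGraph α} {S : Set α}
    (hinv : ∀ a b, G'.Adj a b → (a ∈ S ↔ b ∈ S)) {u v : α} (h : G'.Reachable u v) :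
    u ∈ S ↔ v ∈ S := by
  obtain ⟨w⟩ := h
  induction w with
  | nil => rfl
  | cons ha q ih => exact (hinv _ _ ha).trans ih

lemma graphOf_acyclic {p : α → α} {r : α} (h : IsRTF r p) : (graphOf p).IsAcyclic := by
  rw [isAcyclic_iff_forall_adj_isBridge]
  -- main claim: if p x = y and x ≠ y then s(x,y) is a bridge
  have main : ∀ x y : α, x ≠ y → p x = y → (graphOf p).IsBridge s(x, y) := by
    intro x y hne hpx
    rw [isBridge_iff]
    set S : Set α := {v | ∃ k, p^[k] v = x} with hS
    have hxS : x ∈ S := ⟨0, rfl⟩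
    have hyS : y ∉ S := by
      rintro ⟨k, hk⟩
      have hper : x = r := by
        refine per_eq_of_reaches' ⟨k + 1, Nat.succ_pos k, ?_⟩ (h.2 x).choose_spec h.1
        rw [Function.iterate_succ_apply, hpx, hk]
      apply hne
      rw [hper, ← hpx, hper, h.1]
    -- invariant along edges of the deleted graph
    have inv : ∀ a b : α, ((graphOf p) \ fromEdgeSet {s(x, y)}).Adj a b → (a ∈ S ↔ b ∈ S) := by
      have key : ∀ a b : α, a ≠ b → p a = b → s(a, b) ≠ s(x, y) → (a ∈ S ↔ b ∈ S) := by
        intro a b hab hpa hedge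
        constructor
        · rintro ⟨k, hk⟩
          rcases Nat.eq_zero_or_pos k with rfl | hkpos
          · exfalso
            apply hedge
            simp only [Function.iterate_zero, id_eq] at hk
            have hb : b = y := by rw [← hpa, hk, hpx]
            rw [hk, hb]
          · refine ⟨k - 1, ?_⟩
            have h5 : p^[k-1] (p a) = x := by
              rw [← Function.iterate_succ_apply, Nat.succ_eq_add_one]
              have h4 : k - 1 + 1 = k := by omega
              rw [h4]
              exact hk
            rwa [hpa] at h5
        · rintro ⟨k, hk⟩
          exact ⟨k + 1, by rw [Function.iterate_succ_apply, hpa, hk]⟩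
      intro a b hab
      rw [sdiff_adj, graphOf_adj, fromEdgeSet_adj] at hab
      obtain ⟨⟨hne', hor⟩, hnot⟩ := hab
      have hedge : s(a, b) ≠ s(x, y) := fun hcon => hnot ⟨by rw [hcon]; exact Set.mem_singleton _, hne'⟩
      rcases hor with hpa | hpb
      · exact key a b hne' hpa hedge
      · exact (key b a (Ne.symm hne') hpb (by rwa [Sym2.eq_swap] at hedge)).symm
    intro hreach
    exact hyS ((reachable_invariant inv hreach).1 hxS)
  intro a b hab
  rw [graphOf_adj] at hab
  rcases hab.2 with hpa | hpb
  · exact main a b hab.1 hpa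
  · rw [Sym2.eq_swap]; exact main b a (Ne.symm hab.1) hpb

lemma graphOf_isTree {p : α → α} {r : α} (h : IsRTF r p) : (graphOf p).IsTree :=
  ⟨graphOf_connected h.2, graphOf_acyclic h⟩


noncomputable def thePath (hG : G.IsTree) (v w : α) : G.Walk v w :=
  (hG.existsUnique_path v w).choose

lemma thePath_isPath (hG : G.IsTree) (v w : α) : (thePath hG v w).IsPath :=
  (hG.existsUnique_path v w).choose_spec.1

lemma thePath_unique (hG : G.IsTree) {v w : α} {q : G.Walk v w} (hq : q.IsPath) :
    q = thePath hG v w :=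
  (hG.existsUnique_path v w).choose_spec.2 q hq

lemma thePath_self (hG : G.IsTree) (v : α) : thePath hG v v = Walk.nil :=
  (thePath_unique hG (Walk.IsPath.nil)).symm

noncomputable def toParent (hG : G.IsTree) (r : α) : α → α :=
  fun v => if v = r then r else (thePath hG v r).getVert 1

lemma toParent_root (hG : G.IsTree) (r : α) : toParent hG r r = r := if_pos rfl

lemma toParent_eq (hG : G.IsTree) {r v : α} (hv : v ≠ r) :
    toParent hG r v = (thePath hG v r).getVert 1 := if_neg hv

lemma toParent_adj (hG : G.IsTree) {r v : α} (hv : v ≠ r) :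
    G.Adj v (toParent hG r v) := by
  rw [toParent_eq hG hv]
  exact Walk.adj_snd (Walk.not_nil_of_ne hv)

lemma length_toParent (hG : G.IsTree) {r v : α} (hv : v ≠ r) :
    (thePath hG (toParent hG r v) r).length + 1 = (thePath hG v r).length := by
  have hnil : ¬ (thePath hG v r).Nil := Walk.not_nil_of_ne hv
  have h1 : toParent hG r v = (thePath hG v r).getVert 1 := toParent_eq hG hv
  have h2 : ((thePath hG v r).tail.copy h1.symm rfl) = thePath hG (toParent hG r v) r :=
    thePath_unique hG (by rw [Walk.isPath_copy]; exact (thePath_isPath hG v r).tail)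
  rw [← h2, Walk.length_copy, Walk.length_tail_add_one hnil]

lemma toParent_reach (hG : G.IsTree) (r : α) :
    ∀ (n : ℕ) (v : α), (thePath hG v r).length = n → (toParent hG r)^[n] v = r := by
  intro n
  induction n with
  | zero =>
    intro v hv
    have : (thePath hG v r).Nil := Walk.nil_iff_length_eq.2 hv
    exact this.eq
  | succ n ih =>
    intro v hv
    have hvr : v ≠ r := by
      rintro rfl
      rw [thePath_self hG v] at hv
      simp at hv
    rw [Function.iterate_succ_apply]
    apply ih
    have := length_toParent hG hvr
    omega

lemma toParent_isRTF (hG : G.IsTree) (r : α) : IsRTF r (toParent hG r) :=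
  ⟨toParent_root hG r, fun v => ⟨(thePath hG v r).length, toParent_reach hG r _ v rfl⟩⟩


-- roundtrip 1 : graphOf (toParent hG r) = G
lemma adj_of_parent (hG : G.IsTree) (r : α) {x y : α} (hne : x ≠ y)
    (hp : toParent hG r x = y) : G.Adj x y := by
  have hxr : x ≠ r := by
    rintro rfl
    simp only [toParent, if_pos rfl] at hp
    exact hne hp
  rw [toParent_eq hG hxr] at hp
  exact hp ▸ Walk.adj_snd (Walk.not_nil_of_ne hxr)

lemma parent_of_adj (hG : G.IsTree) (r : α) {x y : α} (ha : G.Adj x y) :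
    toParent hG r x = y ∨ toParent hG r y = x := by
  have key : ∀ x y : α, G.Adj x y → x ∉ (thePath hG y r).support → toParent hG r x = y := by
    intro x y ha hx
    have hpath : (Walk.cons ha (thePath hG y r)).IsPath :=
      (Walk.cons_isPath_iff ha _).2 ⟨thePath_isPath hG y r, hx⟩
    have hxr : x ≠ r := by
      rintro rfl
      have h2 := hpath
      rw [Walk.isPath_iff_eq_nil] at h2
      simpa using congrArg Walk.length h2
    rw [toParent_eq hG hxr, ← thePath_unique hG hpath]
    simp [Walk.getVert_cons_succ, Walk.getVert_zero]
  by_cases hx : x ∈ (thePath hG y r).support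
  · right
    apply key y x ha.symm
    -- show y ∉ support (thePath x r), where thePath x r = dropUntil
    have hdrop : (thePath hG y r).dropUntil x hx = thePath hG x r :=
      thePath_unique hG ((thePath_isPath hG y r).dropUntil hx)
    rw [← hdrop]
    intro hy
    have hnodup := (thePath_isPath hG y r).support_nodup
    rw [← Walk.take_spec (thePath hG y r) hx, Walk.support_append] at hnodup
    have hy1 : y ∈ ((thePath hG y r).takeUntil x hx).support := Walk.start_mem_support _
    have hy2 : y ∈ ((thePath hG y r).dropUntil x hx).support.tail := by
      have hsupp := Walk.support_eq_cons ((thePath hG y r).dropUntil x hx)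
      rw [hsupp] at hy
      rcases List.mem_cons.1 hy with h | h
      · exact absurd h ha.ne'
      · rw [hsupp]; exact h
    rw [List.nodup_append] at hnodup
    exact hnodup.2.2 y hy1 y hy2 rfl
  · left; exact key x y ha hx

lemma graphOf_toParent (hG : G.IsTree) (r : α) : graphOf (toParent hG r) = G := by
  ext x y
  rw [graphOf_adj]
  constructor
  · rintro ⟨hne, h | h⟩
    · exact adj_of_parent hG r hne h
    · exact (adj_of_parent hG r (Ne.symm hne) h).symm
  · intro ha
    exact ⟨ha.ne, parent_of_adj hG r ha⟩


/-- explicit walk from v to r following p -/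
def chainWalk (p : α → α) (r : α) :
    ∀ (k : ℕ) (v : α), p^[k] v = r → (∀ j < k, p^[j] v ≠ r) → (graphOf p).Walk v r
  | 0, v, hL, _ => (Walk.nil' r).copy hL.symm rfl
  | (k+1), v, hL, hmin =>
    Walk.cons
      (by
        refine (graphOf_adj p v (p v)).2 ⟨?_, Or.inl rfl⟩
        intro he
        exact hmin 0 (Nat.succ_pos k)
          (by simpa using (Function.iterate_fixed he.symm (k+1)).symm.trans hL))
      (chainWalk p r k (p v)
        (by rwa [← Function.iterate_succ_apply])
        (fun j hj => by
          rw [← Function.iterate_succ_apply]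
          exact hmin (j+1) (by omega)))

lemma chainWalk_support (p : α → α) (r : α) :
    ∀ (k : ℕ) (v : α) (hL : p^[k] v = r) (hmin : ∀ j < k, p^[j] v ≠ r),
      (chainWalk p r k v hL hmin).support = (List.range (k+1)).map (fun j => p^[j] v) := by
  intro k
  induction k with
  | zero => intro v hL hmin; simp only [Function.iterate_zero, id_eq] at hL; subst hL; rfl
  | succ k ih =>
    intro v hL hmin
    rw [chainWalk, Walk.support_cons, ih]
    conv_rhs => rw [List.range_succ_eq_map]
    simp [List.map_cons, List.map_map, Function.iterate_zero, id_eq,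
      Function.comp_def, Function.iterate_succ_apply]

lemma chainWalk_isPath (p : α → α) (r : α) (k : ℕ) (v : α) (hL : p^[k] v = r)
    (hmin : ∀ j < k, p^[j] v ≠ r) : (chainWalk p r k v hL hmin).IsPath := by
  rw [Walk.isPath_def, chainWalk_support]
  rw [List.nodup_map_iff_inj_on List.nodup_range]
  intro i hi j hj hij
  exact chain_inj hL hmin i (by simpa using Nat.lt_succ_iff.1 (List.mem_range.1 hi))
    j (by simpa using Nat.lt_succ_iff.1 (List.mem_range.1 hj)) hij

lemma chainWalk_getVert_one (p : α → α) (r : α) (k : ℕ) (v : α) (hL : p^[k+1] v = r)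
    (hmin : ∀ j < k+1, p^[j] v ≠ r) :
    (chainWalk p r (k+1) v hL hmin).getVert 1 = p v := by
  rw [chainWalk]
  rw [Walk.getVert_cons_succ, Walk.getVert_zero]


-- roundtrip 2
lemma toParent_graphOf {p : α → α} {r : α} (h : IsRTF r p) :
    toParent (graphOf_isTree h) r = p := by
  funext v
  by_cases hv : v = r
  · subst hv
    rw [toParent, if_pos rfl, h.1]
  · have hex := h.2 v
    obtain ⟨K, hK, hmin⟩ : ∃ K, p^[K] v = r ∧ ∀ j < K, p^[j] v ≠ r :=
      ⟨Nat.find hex, Nat.find_spec hex, fun j hj => Nat.find_min hex hj⟩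
    obtain ⟨k, rfl⟩ : ∃ k, K = k + 1 := by
      refine ⟨K - 1, ?_⟩
      have : K ≠ 0 := fun h0 => hv (by simpa [h0] using hK)
      omega
    rw [toParent_eq _ hv,
      ← thePath_unique (graphOf_isTree h) (chainWalk_isPath p r (k+1) v hK hmin),
      chainWalk_getVert_one]

noncomputable def treeEquiv (r : α) :
    {G : SimpleGraph α // G.IsTree} ≃ {p : α → α // IsRTF r p} where
  toFun G := ⟨toParent G.2 r, toParent_isRTF G.2 r⟩
  invFun p := ⟨graphOf p.1, graphOf_isTree p.2⟩
  left_inv G := Subtype.ext (graphOf_toParent G.2 r)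
  right_inv p := Subtype.ext (toParent_graphOf p.2)


end Graph

section Sorted
variable {α : Type*} [LinearOrder α] [Nonempty α]


noncomputable def srt (C : Finset α) : ℕ → α :=
  fun k => (C.sort (·≤·)).getD k (Classical.arbitrary α)

noncomputable def idx (C : Finset α) (v : α) : ℕ := List.idxOf v (C.sort (·≤·))

lemma srt_mem {C : Finset α} {k : ℕ} (hk : k < C.card) : srt C k ∈ C := by
  rw [srt, List.getD_eq_getElem _ _ (by rwa [Finset.length_sort])]
  exact (Finset.mem_sort _).1 (List.getElem_mem _)

lemma srt_injOn {C : Finset α} {k l : ℕ} (hk : k < C.card) (hl : l < C.card)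
    (h : srt C k = srt C l) : k = l := by
  have hnd := C.sort_nodup (·≤·)
  rw [srt, srt, List.getD_eq_getElem _ _ (by rwa [Finset.length_sort]),
    List.getD_eq_getElem _ _ (by rwa [Finset.length_sort])] at h
  exact List.Nodup.getElem_inj_iff hnd |>.1 h

lemma idx_lt {C : Finset α} {v : α} (hv : v ∈ C) : idx C v < C.card := by
  rw [idx, ← Finset.length_sort (α := α) (·≤·)]
  exact List.idxOf_lt_length_iff.2 ((Finset.mem_sort _).2 hv)

lemma srt_idx {C : Finset α} {v : α} (hv : v ∈ C) : srt C (idx C v) = v := by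
  have h1 : idx C v < (C.sort (·≤·)).length :=
    List.idxOf_lt_length_iff.2 ((Finset.mem_sort _).2 hv)
  rw [srt, List.getD_eq_getElem _ _ h1]
  exact List.getElem_idxOf h1

lemma idx_srt {C : Finset α} {k : ℕ} (hk : k < C.card) : idx C (srt C k) = k :=
  srt_injOn (idx_lt (srt_mem hk)) hk (srt_idx (srt_mem hk))

lemma srt_surj {C : Finset α} {v : α} (hv : v ∈ C) : ∃ k < C.card, srt C k = v :=
  ⟨idx C v, idx_lt hv, srt_idx hv⟩


end Sorted

section Joyal
variable {α : Type*} [Fintype α] [LinearOrder α] [Nonempty α]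


/-- a general lemma: an injective self-map of a finset makes all its points periodic -/
lemma per_of_mapsTo_injOn {g : α → α} {C : Finset α} (hmaps : ∀ v ∈ C, g v ∈ C)
    (hinj : ∀ v ∈ C, ∀ w ∈ C, g v = g w → v = w) {v : α} (hv : v ∈ C) :
    ∃ k, 0 < k ∧ g^[k] v = v := by
  have horb : ∀ k, g^[k] v ∈ C := iterate_mem_of_closed hmaps hv
  obtain ⟨i, j, hne, he⟩ := Finite.exists_ne_map_eq_of_infinite (fun k : ℕ => g^[k] v)
  wlog hij : i < j generalizing i j
  · exact this j i hne.symm he.symm (by omega)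
  -- cancel: from g^[i] v = g^[j] v deduce v = g^[j-i] v
  have cancel : ∀ i j, i ≤ j → g^[i] v = g^[j] v → v = g^[j-i] v := by
    intro i
    induction i with
    | zero => intro j _ h; simpa using h
    | succ i ih =>
      intro j hj h
      rw [Function.iterate_succ_apply'] at h
      have hj1 : j = (j - 1) + 1 := by omega
      rw [hj1, Function.iterate_succ_apply'] at h
      have := hinj _ (horb i) _ (horb (j-1)) h
      have h2 := ih (j-1) (by omega) this
      rw [h2]; congr 1; omega
  exact ⟨j - i, by omega, (cancel i j hij.le he).symm⟩

/-- bi-pointed rooted trees, as parent functions -/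
structure Pointed (α : Type*) where
  a : α
  b : α
  p : α → α
  hp : IsRTF a p

namespace Pointed

variable (x : Pointed α)

noncomputable def L : ℕ := Nat.find (x.hp.2 x.b)

lemma chain_hit : x.p^[x.L] x.b = x.a := Nat.find_spec (x.hp.2 x.b)
lemma chain_min : ∀ j < x.L, x.p^[j] x.b ≠ x.a := fun j hj => Nat.find_min (x.hp.2 x.b) hj

noncomputable def C : Finset α := (Finset.range (x.L + 1)).image (fun k => x.p^[k] x.b)

lemma mem_C {v : α} : v ∈ x.C ↔ ∃ k ≤ x.L, x.p^[k] x.b = v := by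
  simp only [C, Finset.mem_image, Finset.mem_range, Nat.lt_succ_iff]

lemma card_C : x.C.card = x.L + 1 := by
  rw [C, Finset.card_image_of_injOn, Finset.card_range]
  intro i hi j hj hij
  simp only [Finset.mem_coe, Finset.mem_range, Nat.lt_succ_iff] at hi hj
  exact chain_inj x.chain_hit x.chain_min i hi j hj hij

lemma a_mem_C : x.a ∈ x.C := x.mem_C.2 ⟨x.L, le_refl _, x.chain_hit⟩
lemma b_mem_C : x.b ∈ x.C := x.mem_C.2 ⟨0, Nat.zero_le _, rfl⟩

/-- the Joyal map -/
noncomputable def phi : α → α :=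
  fun v => if v ∈ x.C then x.p^[idx x.C v] x.b else x.p v

lemma phi_srt {k : ℕ} (hk : k ≤ x.L) : x.phi (srt x.C k) = x.p^[k] x.b := by
  have hk' : k < x.C.card := by rw [card_C]; omega
  rw [phi, if_pos (srt_mem hk'), idx_srt hk']

lemma phi_off {v : α} (hv : v ∉ x.C) : x.phi v = x.p v := if_neg hv

lemma phi_mem {v : α} (hv : v ∈ x.C) : x.phi v ∈ x.C := by
  rw [phi, if_pos hv]
  have := idx_lt hv
  rw [card_C] at this
  exact x.mem_C.2 ⟨_, by omega, rfl⟩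

lemma phi_injOn {v w : α} (hv : v ∈ x.C) (hw : w ∈ x.C) (h : x.phi v = x.phi w) : v = w := by
  rw [phi, if_pos hv, phi, if_pos hw] at h
  have h1 := idx_lt hv; have h2 := idx_lt hw
  rw [card_C] at h1 h2
  have := chain_inj x.chain_hit x.chain_min _ (by omega : idx x.C v ≤ x.L) _
    (by omega : idx x.C w ≤ x.L) h
  rw [← srt_idx hv, ← srt_idx hw, this]

/-- periodic points of phi are exactly the chain -/
lemma per_phi : per x.phi = ↑x.C := by
  ext v
  simp only [Finset.mem_coe]
  constructor
  · intro hper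
    by_contra hv
    -- v ∉ C: the orbit enters C and stays, contradiction with periodicity
    have hex : ∃ k, x.p^[k] v ∈ x.C := by
      obtain ⟨k, hk⟩ := x.hp.2 v
      exact ⟨k, hk ▸ x.a_mem_C⟩
    obtain ⟨m, hmem, hmin⟩ : ∃ m, x.p^[m] v ∈ x.C ∧ ∀ j < m, x.p^[j] v ∉ x.C :=
      ⟨Nat.find hex, Nat.find_spec hex, fun j hj => Nat.find_min hex hj⟩
    have hagree : ∀ j ≤ m, x.phi^[j] v = x.p^[j] v :=
      iterate_eq_of_agree (C := ↑x.C) (f := x.p) (g := x.phi) (fun w hw => (x.phi_off hw).symm) hmin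
    have hentry : x.phi^[m] v ∈ x.C := (hagree m le_rfl).symm ▸ hmem
    have hstay : ∀ t, m ≤ t → x.phi^[t] v ∈ x.C := by
      intro t ht
      have h5 : x.phi^[t - m + m] v ∈ x.C := by
        rw [Function.iterate_add_apply]
        have := iterate_mem_of_closed (C := (↑x.C : Set α)) (f := x.phi)
          (fun w hw => by simpa using x.phi_mem (by simpa using hw)) (by simpa using hentry)
          (t - m)
        simpa using this
      rwa [Nat.sub_add_cancel ht] at h5
    obtain ⟨k, hk, hke⟩ := hper
    have hcyc : ∀ t, x.phi^[k * t] v = v := by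
      intro t
      rw [mul_comm, Function.iterate_mul]
      exact Function.IsPeriodicPt.iterate hke t
    have : v ∈ x.C := by
      have h1 := hstay (k * (m+1)) (by nlinarith)
      rwa [hcyc (m+1)] at h1
    exact hv this
  · intro hv
    exact per_of_mapsTo_injOn (fun w hw => x.phi_mem hw) (fun w hw u hu => x.phi_injOn hw hu) hv

end Pointed

section Psi
variable (f : α → α)

noncomputable def Cper : Finset α := (Set.toFinite (per f)).toFinset

lemma mem_Cper {v : α} : v ∈ Cper f ↔ v ∈ per f := Set.Finite.mem_toFinset _

noncomputable def M : ℕ := (Cper f).card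

lemma M_pos : 0 < M f := by
  obtain ⟨m, hm⟩ := mem_per_iterate f (Classical.arbitrary α)
  exact Finset.card_pos.2 ⟨_, (mem_Cper f).2 hm⟩

noncomputable def chain' : ℕ → α := fun k => f (srt (Cper f) k)

lemma chain'_mem {k : ℕ} (hk : k < M f) : chain' f k ∈ Cper f :=
  (mem_Cper f).2 (per_closed ((mem_Cper f).1 (srt_mem hk)))

lemma chain'_inj {k l : ℕ} (hk : k < M f) (hl : l < M f)
    (h : chain' f k = chain' f l) : k = l :=
  srt_injOn hk hl (per_inj ((mem_Cper f).1 (srt_mem hk)) ((mem_Cper f).1 (srt_mem hl)) h)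

lemma chain'_surj {v : α} (hv : v ∈ Cper f) : ∃ k, k < M f ∧ chain' f k = v := by
  have himg : (Finset.range (M f)).image (chain' f) = Cper f := by
    apply Finset.eq_of_subset_of_card_le
    · intro w hw
      obtain ⟨k, hk, rfl⟩ := Finset.mem_image.1 hw
      exact chain'_mem f (Finset.mem_range.1 hk)
    · rw [Finset.card_image_of_injOn fun i hi j hj =>
        chain'_inj f (Finset.mem_range.1 hi) (Finset.mem_range.1 hj), Finset.card_range]
      exact le_refl _
  rw [← himg] at hv
  obtain ⟨k, hk, he⟩ := Finset.mem_image.1 hv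
  exact ⟨k, Finset.mem_range.1 hk, he⟩

open Classical in
noncomputable def invIdx (v : α) (h : v ∈ Cper f) : ℕ := Nat.find (chain'_surj f h)

lemma invIdx_spec {v : α} (h : v ∈ Cper f) :
    invIdx f v h < M f ∧ chain' f (invIdx f v h) = v := by
  classical
  exact Nat.find_spec (chain'_surj f h)

lemma invIdx_chain' {k : ℕ} (hk : k < M f) (h : chain' f k ∈ Cper f) :
    invIdx f (chain' f k) h = k := by
  have hs := invIdx_spec f h
  exact chain'_inj f hs.1 hk hs.2

noncomputable def pback : α → α := fun v =>
  if h : v ∈ Cper f then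
    (if invIdx f v h + 1 < M f then chain' f (invIdx f v h + 1) else v)
  else f v

lemma pback_off {v : α} (hv : v ∉ Cper f) : pback f v = f v := dif_neg hv

lemma pback_chain' {k : ℕ} (hk : k < M f) :
    pback f (chain' f k) = if k + 1 < M f then chain' f (k + 1) else chain' f k := by
  rw [pback, dif_pos (chain'_mem f hk), invIdx_chain' f hk]

lemma pback_iter_chain' : ∀ (t j : ℕ), j + t = M f - 1 →
    (pback f)^[t] (chain' f j) = chain' f (M f - 1) := by
  intro t
  induction t with
  | zero => intro j hj; simp only [Function.iterate_zero, id_eq]; rw [← hj]; simp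
  | succ t ih =>
    intro j hj
    have hM := M_pos f
    rw [Function.iterate_succ_apply, pback_chain' f (by omega), if_pos (by omega)]
    exact ih (j+1) (by omega)

lemma pback_reach (v : α) : ∃ k, (pback f)^[k] v = chain' f (M f - 1) := by
  have hex : ∃ m, f^[m] v ∈ Cper f := by
    obtain ⟨m, hm⟩ := mem_per_iterate f v
    exact ⟨m, (mem_Cper f).2 hm⟩
  obtain ⟨m, hmem, hmin⟩ : ∃ m, f^[m] v ∈ Cper f ∧ ∀ j < m, f^[j] v ∉ Cper f :=
    ⟨Nat.find hex, Nat.find_spec hex, fun j hj => Nat.find_min hex hj⟩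
  have hagree : ∀ j ≤ m, (pback f)^[j] v = f^[j] v :=
    iterate_eq_of_agree (C := (↑(Cper f) : Set α)) (f := f) (g := pback f)
      (fun w hw => (pback_off f (by simpa using hw)).symm) (by simpa using hmin)
  obtain ⟨k, hk, hke⟩ := chain'_surj f hmem
  refine ⟨m + (M f - 1 - k), ?_⟩
  rw [add_comm, Function.iterate_add_apply, hagree m le_rfl, ← hke]
  exact pback_iter_chain' f _ k (by omega)

lemma pback_isRTF : IsRTF (chain' f (M f - 1)) (pback f) := by
  constructor
  · rw [pback_chain' f (by have := M_pos f; omega), if_neg (by have := M_pos f; omega)]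
  · exact pback_reach f

noncomputable def psi : Pointed α :=
  ⟨chain' f (M f - 1), chain' f 0, pback f, pback_isRTF f⟩

lemma image_chain' : (Finset.range (M f)).image (chain' f) = Cper f := by
  apply Finset.eq_of_subset_of_card_le
  · intro w hw
    obtain ⟨k, hk, rfl⟩ := Finset.mem_image.1 hw
    exact chain'_mem f (Finset.mem_range.1 hk)
  · rw [Finset.card_image_of_injOn fun i hi j hj =>
      chain'_inj f (Finset.mem_range.1 hi) (Finset.mem_range.1 hj), Finset.card_range]
    exact le_refl _

end Psi

lemma Pointed.ext' {x y : Pointed α} (ha : x.a = y.a) (hb : x.b = y.b) (hp : x.p = y.p) :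
    x = y := by
  cases x; cases y
  cases ha; cases hb; cases hp
  exact congrArg _ (Subsingleton.elim _ _)

theorem psi_phi (x : Pointed α) : psi x.phi = x := by
  set f := x.phi with hf
  have h1 : Cper f = x.C := by
    ext v
    rw [mem_Cper]
    show v ∈ per x.phi ↔ _
    rw [x.per_phi, Finset.mem_coe]
  have hM : M f = x.L + 1 := by rw [M, h1, x.card_C]
  have hch : ∀ k ≤ x.L, chain' f k = x.p^[k] x.b := by
    intro k hk
    rw [chain', h1]
    exact x.phi_srt hk
  have ha : chain' f (M f - 1) = x.a := by
    rw [hM]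
    simpa using (hch x.L le_rfl).trans x.chain_hit
  have hb : chain' f 0 = x.b := by simpa using hch 0 (Nat.zero_le _)
  have hp : pback f = x.p := by
    funext v
    by_cases hv : v ∈ x.C
    · obtain ⟨k, hk, hkv⟩ := x.mem_C.1 hv
      have hkM : k < M f := by omega
      rw [← hkv, ← hch k hk, pback_chain' f hkM]
      by_cases hkL : k + 1 < M f
      · rw [if_pos hkL, hch (k+1) (by omega), hch k hk, Function.iterate_succ_apply']
      · rw [if_neg hkL]
        have hkeq : k = x.L := by omega
        rw [hkeq, hch x.L le_rfl, x.chain_hit]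
        exact x.hp.1.symm
    · rw [pback_off f (h1 ▸ hv)]
      exact x.phi_off hv
  exact Pointed.ext' ha hb hp

theorem phi_psi (f : α → α) : (psi f).phi = f := by
  have hMpos := M_pos f
  set y := psi f with hy
  have hya : y.a = chain' f (M f - 1) := rfl
  have hyb : y.b = chain' f 0 := rfl
  have hyp : y.p = pback f := rfl
  have step1 : ∀ k ≤ M f - 1, (pback f)^[k] (chain' f 0) = chain' f k := by
    intro k hk
    induction k with
    | zero => rfl
    | succ k ih =>
      rw [Function.iterate_succ_apply', ih (by omega), pback_chain' f (by omega),
        if_pos (by omega)]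
  have hL : y.L = M f - 1 := by
    apply le_antisymm
    · apply Nat.find_le
      rw [hyp, hyb, hya]
      exact step1 _ le_rfl
    · by_contra hlt
      push_neg at hlt
      have hspec := Nat.find_spec (y.hp.2 y.b)
      have h2 : (pback f)^[y.L] (chain' f 0) = chain' f (M f - 1) := by
        rw [← hyp, ← hyb, ← hya]; exact hspec
      rw [step1 y.L (by omega)] at h2
      have := chain'_inj f (by omega) (by omega) h2
      omega
  have hC : y.C = Cper f := by
    rw [← image_chain' f]
    rw [Pointed.C, hL]
    have hM1 : M f - 1 + 1 = M f := by omega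
    rw [hM1]
    apply Finset.image_congr
    intro k hk
    simp only [Finset.mem_coe, Finset.mem_range] at hk
    rw [hyp, hyb]
    exact step1 k (by omega)
  funext v
  by_cases hv : v ∈ y.C
  · rw [Pointed.phi, if_pos hv]
    have hv' : v ∈ Cper f := hC ▸ hv
    have hidx : idx y.C v < M f := by
      have := idx_lt hv
      rwa [y.card_C, hL, Nat.sub_add_cancel hMpos] at this
    rw [hyp, hyb, step1 _ (by omega)]
    have : idx y.C v = idx (Cper f) v := by rw [hC]
    rw [this, chain', srt_idx hv']
  · rw [Pointed.phi, if_neg hv, hyp, pback_off f (hC ▸ hv)]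

/-- Joyal's bijection -/
noncomputable def joyalEquiv : Pointed α ≃ (α → α) where
  toFun := Pointed.phi
  invFun := psi
  left_inv := psi_phi
  right_inv := phi_psi


end Joyal

section Final
variable {α : Type*} [Fintype α] [LinearOrder α] [Nonempty α]

noncomputable def pointedEquivProd :
    Pointed α ≃ (α × α) × {G : SimpleGraph α // G.IsTree} where
  toFun x := ((x.a, x.b), (treeEquiv x.a).symm ⟨x.p, x.hp⟩)
  invFun y := ⟨y.1.1, y.1.2, ((treeEquiv y.1.1) y.2).1, ((treeEquiv y.1.1) y.2).2⟩
  left_inv x := by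
    refine Pointed.ext' ?_ ?_ ?_
    · rfl
    · rfl
    · exact congrArg Subtype.val ((treeEquiv x.a).apply_symm_apply ⟨x.p, x.hp⟩)
  right_inv y := by
    obtain ⟨⟨a, b⟩, G⟩ := y
    exact congrArg _ ((treeEquiv a).symm_apply_apply G)

theorem count_eq : Nat.card α * Nat.card α * Nat.card {G : SimpleGraph α // G.IsTree}
    = Nat.card α ^ Nat.card α := by
  have h1 := Nat.card_congr ((pointedEquivProd (α := α)).symm.trans (joyalEquiv (α := α)))
  rw [Nat.card_prod, Nat.card_prod, Nat.card_fun] at h1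
  rw [← h1]

end Final
end CayleyProof

/-- Cayley's formula: the number of labeled trees on a vertex set with `n ≥ 1`
elements is `n^{n−2}`. -/
theorem cayley_formula (n : ℕ) (hn : 1 ≤ n) :
    Nat.card {G : SimpleGraph (Fin n) // G.IsTree} = n ^ (n - 2) := by
  have : Nonempty (Fin n) := ⟨⟨0, hn⟩⟩
  have h := CayleyProof.count_eq (α := Fin n)
  rw [Nat.card_eq_fintype_card, Fintype.card_fin] at h
  have hsplit : n ^ n = n * n * n ^ (n - 2) := by
    rcases Nat.lt_or_ge n 2 with h2 | h2
    · interval_cases n <;> simp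
    · have h3 : n = (n - 2) + 2 := by omega
      calc n ^ n = n ^ (n - 2 + 2) := by rw [← h3]
        _ = n * n * n ^ (n - 2) := by ring
  rw [hsplit] at h
  exact Nat.eq_of_mul_eq_mul_left (by positivity) h
end
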